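/- Let γ₁, γ₂ ∈ ρ_NED(A) with γ₁ < γ₂ and set F(l) = U_{γ₁}(l) ∩ S_{γ₂}(l) for l ∈ ℤ. Then the following are equivalent: (A) F(l) = {0} for every l ∈ ℤ; (B) [γ₁, γ₂] ⊆ ρ_NED(A); (C) S_{γ₁}(l) = S_{γ₂}(l) and U_{γ₁}(l) = U_{γ₂}(l) for all l; (D) for every γ ∈ [γ₁, γ₂] one has γ ∈ ρ_NED(A) with S_γ(l) = S_{γ₂}(l) and U_γ(l) = U_{γ₂}(l) for all l. -/

import Mathlib

open Matrix

attribute [local instance] Matrix.linftyOpNormedAddCommGroup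

abbrev Mat (N : ℕ) := Matrix (Fin N) (Fin N) ℝ

noncomputable def fundSolNat {N : ℕ} (A : ℤ → GL (Fin N) ℝ) : ℕ → GL (Fin N) ℝ
  | 0 => 1
  | n + 1 => A (n : ℤ) * fundSolNat A n

noncomputable def fundSolNeg {N : ℕ} (A : ℤ → GL (Fin N) ℝ) : ℕ → GL (Fin N) ℝ
  | 0 => (A (-1))⁻¹
  | n + 1 => (A (Int.negSucc (n + 1)))⁻¹ * fundSolNeg A n

noncomputable def fundSol {N : ℕ} (A : ℤ → GL (Fin N) ℝ) : ℤ → GL (Fin N) ℝ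
  | Int.ofNat n => fundSolNat A n
  | Int.negSucc n => fundSolNeg A n

/-- The evolution operator `Φ(k,l)` of `x_{k+1} = A_k x_k`. -/
noncomputable def evol {N : ℕ} (A : ℤ → GL (Fin N) ℝ) (k l : ℤ) : Mat N :=
  ↑(fundSol A k * (fundSol A l)⁻¹)

def IsInvariantProjector {N : ℕ} (A : ℤ → GL (Fin N) ℝ) (P : ℤ → Mat N) : Prop :=
  (∀ k, P k * P k = P k) ∧ ∀ k, P (k + 1) * (A k : Mat N) = (A k : Mat N) * P k

/-- Evolution operator `Φ_γ(k,l) = γ^{-(k-l)} Φ(k,l)` of `x_{k+1} = (1/γ) A_k x_k`. -/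
noncomputable def evolW {N : ℕ} (A : ℤ → GL (Fin N) ℝ) (γ : ℝ) (k l : ℤ) : Mat N :=
  γ ^ (l - k) • evol A k l

def NEDWith {N : ℕ} (A : ℤ → GL (Fin N) ℝ) (γ : ℝ) (P : ℤ → Mat N) (K α ε : ℝ) : Prop :=
  IsInvariantProjector A P ∧ 1 ≤ K ∧ 0 < α ∧ α < 1 ∧ 1 ≤ ε ∧
    (∀ k l : ℤ, l ≤ k → ‖evolW A γ k l * P l‖ ≤ K * α ^ (k - l) * ε ^ l) ∧
    (∀ k l : ℤ, k ≤ l → ‖evolW A γ k l * (1 - P l)‖ ≤ K * (1 / α) ^ (k - l) * ε ^ l)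

def HasNED {N : ℕ} (A : ℤ → GL (Fin N) ℝ) (γ : ℝ) : Prop :=
  ∃ P K α ε, NEDWith A γ P K α ε

def HasStrongNED {N : ℕ} (A : ℤ → GL (Fin N) ℝ) (γ : ℝ) : Prop :=
  ∃ P K α ε, NEDWith A γ P K α ε ∧ α * ε ^ 2 < 1

def HasED {N : ℕ} (A : ℤ → GL (Fin N) ℝ) (γ : ℝ) : Prop :=
  ∃ P K α, NEDWith A γ P K α 1

def SigmaNED {N : ℕ} (A : ℤ → GL (Fin N) ℝ) : Set ℝ := {γ | 0 < γ ∧ ¬ HasStrongNED A γ}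

def rhoNED {N : ℕ} (A : ℤ → GL (Fin N) ℝ) : Set ℝ := {γ | 0 < γ ∧ HasStrongNED A γ}

def SigmaED {N : ℕ} (A : ℤ → GL (Fin N) ℝ) : Set ℝ := {γ | 0 < γ ∧ ¬ HasED A γ}

def stableSet {N : ℕ} (A : ℤ → GL (Fin N) ℝ) (γ ε : ℝ) (l : ℤ) : Set (Fin N → ℝ) :=
  {ξ | ∃ C : ℝ, ∀ k : ℤ, l ≤ k → ‖(evol A k l).mulVec ξ‖ * γ ^ (-k) * ε ^ (-l) ≤ C}

def unstableSet {N : ℕ} (A : ℤ → GL (Fin N) ℝ) (γ ε : ℝ) (l : ℤ) : Set (Fin N → ℝ) :=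
  {ξ | ∃ C : ℝ, ∀ k : ℤ, k ≤ l → ‖(evol A k l).mulVec ξ‖ * γ ^ (-k) * ε ^ (-l) ≤ C}

attribute [local instance] Matrix.linftyOpNormedSpace

section basics
variable {N : ℕ} (A : ℤ → GL (Fin N) ℝ)

/-- fundamental solution as a matrix -/
noncomputable def fsM (A : ℤ → GL (Fin N) ℝ) (k : ℤ) : Mat N := ((fundSol A k : GL (Fin N) ℝ) : Mat N)
/-- inverse of fundamental solution as a matrix -/
noncomputable def fsMinv (A : ℤ → GL (Fin N) ℝ) (k : ℤ) : Mat N :=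
  (((fundSol A k)⁻¹ : GL (Fin N) ℝ) : Mat N)
/-- coefficient matrix -/
noncomputable def coM (A : ℤ → GL (Fin N) ℝ) (k : ℤ) : Mat N := ((A k : GL (Fin N) ℝ) : Mat N)

lemma fsM_mul_fsMinv (k : ℤ) : fsM A k * fsMinv A k = 1 := by
  unfold fsM fsMinv
  rw [← Units.val_mul, mul_inv_cancel, Units.val_one]

lemma fsMinv_mul_fsM (k : ℤ) : fsMinv A k * fsM A k = 1 := by
  unfold fsM fsMinv
  rw [← Units.val_mul, inv_mul_cancel, Units.val_one]

lemma evol_eq (k l : ℤ) : evol A k l = fsM A k * fsMinv A l := by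
  unfold evol fsM fsMinv
  rw [← Units.val_mul]

lemma fundSol_succ : ∀ k : ℤ, fundSol A (k + 1) = A k * fundSol A k := by
  intro k
  cases k with
  | ofNat n =>
      show fundSol A (Int.ofNat (n + 1)) = _
      show fundSolNat A (n + 1) = _
      rfl
  | negSucc n =>
      cases n with
      | zero =>
          show fundSol A 0 = _
          show (1 : GL (Fin N) ℝ) = A (Int.negSucc 0) * fundSolNeg A 0
          show (1 : GL (Fin N) ℝ) = A (Int.negSucc 0) * (A (-1))⁻¹
          have h : (Int.negSucc 0 : ℤ) = -1 := rfl
          rw [h, mul_inv_cancel]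
      | succ n =>
          show fundSol A (Int.negSucc n) = _
          show fundSolNeg A n = A (Int.negSucc (n + 1)) * ((A (Int.negSucc (n + 1)))⁻¹ * fundSolNeg A n)
          rw [← mul_assoc, mul_inv_cancel, one_mul]

lemma fsM_succ (k : ℤ) : fsM A (k + 1) = coM A k * fsM A k := by
  unfold fsM coM
  rw [fundSol_succ, Units.val_mul]

lemma coM_inv_mul (k : ℤ) : (((A k)⁻¹ : GL (Fin N) ℝ) : Mat N) * coM A k = 1 := by
  unfold coM
  rw [← Units.val_mul, inv_mul_cancel, Units.val_one]

variable {P : ℤ → Mat N}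

lemma inv_fund (hP : IsInvariantProjector A P) :
    ∀ k : ℤ, P k * fsM A k = fsM A k * P 0 := by
  intro k
  induction k using Int.induction_on with
  | zero =>
      have h1 : fsM A 0 = 1 := by
        unfold fsM
        show ((fundSolNat A 0 : GL (Fin N) ℝ) : Mat N) = 1
        show ((1 : GL (Fin N) ℝ) : Mat N) = 1
        rw [Units.val_one]
      rw [h1, mul_one, one_mul]
  | succ i ih =>
      have h2 : P ((i:ℤ) + 1) * coM A i = coM A i * P i := hP.2 i
      rw [fsM_succ, ← mul_assoc, h2, mul_assoc, ih, ← mul_assoc]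
  | pred i ih =>
      have h2pre := hP.2 (-i - 1)
      rw [show (-(i:ℤ) - 1 + 1) = -(i:ℤ) by ring] at h2pre
      have h2 : P (-(i:ℤ)) * coM A (-(i:ℤ)-1) = coM A (-(i:ℤ)-1) * P (-(i:ℤ)-1) := h2pre
      have h3 : fsM A (-(i:ℤ)) = coM A (-(i:ℤ)-1) * fsM A (-(i:ℤ)-1) := by
        have := fsM_succ A (-(i:ℤ)-1)
        rw [show (-(i:ℤ) - 1 + 1) = -(i:ℤ) by ring] at this
        exact this
      have hcancel := coM_inv_mul A (-(i:ℤ)-1)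
      
      have key : coM A (-(i:ℤ)-1) * (P (-(i:ℤ)-1) * fsM A (-(i:ℤ)-1))
          = coM A (-(i:ℤ)-1) * (fsM A (-(i:ℤ)-1) * P 0) := by
        calc coM A (-(i:ℤ)-1) * (P (-(i:ℤ)-1) * fsM A (-(i:ℤ)-1))
            = (coM A (-(i:ℤ)-1) * P (-(i:ℤ)-1)) * fsM A (-(i:ℤ)-1) := by rw [mul_assoc]
          _ = (P (-(i:ℤ)) * coM A (-(i:ℤ)-1)) * fsM A (-(i:ℤ)-1) := by rw [← h2]
          _ = P (-(i:ℤ)) * fsM A (-(i:ℤ)) := by rw [mul_assoc, ← h3]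
          _ = fsM A (-(i:ℤ)) * P 0 := ih
          _ = coM A (-(i:ℤ)-1) * (fsM A (-(i:ℤ)-1) * P 0) := by rw [h3, mul_assoc]
      calc P (-(i:ℤ)-1) * fsM A (-(i:ℤ)-1)
          = ((((A (-(i:ℤ)-1))⁻¹ : GL (Fin N) ℝ) : Mat N) * coM A (-(i:ℤ)-1)) *
              (P (-(i:ℤ)-1) * fsM A (-(i:ℤ)-1)) := by rw [hcancel, one_mul]
        _ = ((((A (-(i:ℤ)-1))⁻¹ : GL (Fin N) ℝ) : Mat N) * coM A (-(i:ℤ)-1)) *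
              (fsM A (-(i:ℤ)-1) * P 0) := by
            rw [mul_assoc, key, ← mul_assoc]
        _ = fsM A (-(i:ℤ)-1) * P 0 := by rw [hcancel, one_mul]

lemma evol_self (l : ℤ) : evol A l l = 1 := by
  rw [evol_eq, fsM_mul_fsMinv]

lemma evol_mul (k m l : ℤ) : evol A k m * evol A m l = evol A k l := by
  rw [evol_eq, evol_eq, evol_eq, mul_assoc, ← mul_assoc (fsMinv A m), fsMinv_mul_fsM, one_mul]

lemma invar (hP : IsInvariantProjector A P) (k l : ℤ) :
    P k * evol A k l = evol A k l * P l := by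
  have hk := inv_fund A hP k
  have hl := inv_fund A hP l
  have hl' : fsMinv A l * P l = P 0 * fsMinv A l := by
    calc fsMinv A l * P l
        = fsMinv A l * (P l * fsM A l) * fsMinv A l := by
          rw [mul_assoc (fsMinv A l), mul_assoc (P l), fsM_mul_fsMinv, mul_one]
      _ = fsMinv A l * (fsM A l * P 0) * fsMinv A l := by rw [hl]
      _ = P 0 * fsMinv A l := by rw [← mul_assoc, fsMinv_mul_fsM, one_mul]
  rw [evol_eq, ← mul_assoc, hk, mul_assoc, mul_assoc, hl', ← mul_assoc]
end basics

section ned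
variable {N : ℕ} {A : ℤ → GL (Fin N) ℝ} {P : ℤ → Mat N} {γ K α ε : ℝ}

lemma zpow_le_zpow_left'' {a b : ℝ} (ha : 0 ≤ a) (hab : a ≤ b) {n : ℤ} (hn : 0 ≤ n) :
    a ^ n ≤ b ^ n := by
  lift n to ℕ using hn
  rw [zpow_natCast, zpow_natCast]
  exact pow_le_pow_left₀ ha hab n

lemma norm_zpow_smul (hγ : 0 < γ) (n : ℤ) (M : Mat N) : ‖γ ^ n • M‖ = γ ^ n * ‖M‖ := by
  rw [norm_smul, Real.norm_eq_abs, abs_of_pos (zpow_pos hγ n)]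

lemma norm_evol_mul (hγ : 0 < γ) (k l : ℤ) (M : Mat N) :
    ‖evol A k l * M‖ = γ ^ (k - l) * ‖evolW A γ k l * M‖ := by
  have h : evol A k l = γ ^ (k - l) • evolW A γ k l := by
    unfold evolW
    rw [smul_smul, ← zpow_add₀ hγ.ne', show k - l + (l - k) = 0 by ring, zpow_zero, one_smul]
  conv_lhs => rw [h]
  rw [Matrix.smul_mul, norm_zpow_smul hγ]

lemma evolW_scale {δ : ℝ} (hγ : γ ≠ 0) (hδ : δ ≠ 0) (k l : ℤ) :
    evolW A δ k l = (γ / δ) ^ (k - l) • evolW A γ k l := by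
  unfold evolW
  rw [smul_smul]
  congr 1
  rw [div_eq_mul_inv, mul_zpow, _root_.inv_zpow', neg_sub]
  have h1 : γ ^ (k - l) * γ ^ (l - k) = 1 := by
    rw [← zpow_add₀ hγ, show k - l + (l - k) = 0 by ring, zpow_zero]
  symm
  calc γ ^ (k - l) * δ ^ (l - k) * γ ^ (l - k)
      = (γ ^ (k - l) * γ ^ (l - k)) * δ ^ (l - k) := by ring
    _ = δ ^ (l - k) := by rw [h1, one_mul]

lemma stable_fix (hγ : 0 < γ) (h : NEDWith A γ P K α 1) (l : ℤ) :
    stableSet A γ 1 l = {ξ | (P l).mulVec ξ = ξ} := by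
  obtain ⟨hPinv, hK, hα0, hα1, -, hs, hu⟩ := h
  ext ξ
  simp only [stableSet, Set.mem_setOf_eq, _root_.one_zpow, mul_one]
  constructor
  · rintro ⟨C, hC⟩
    have hC0 : 0 ≤ C := le_trans (by positivity) (hC l le_rfl)
    have hC' : ∀ k, l ≤ k → ‖(evol A k l).mulVec ξ‖ ≤ C * γ ^ k := by
      intro k hk
      have h2 := hC k hk
      have h3 : 0 < γ ^ k := zpow_pos hγ k
      have h4 := mul_le_mul_of_nonneg_right h2 h3.le
      rw [mul_assoc, ← zpow_add₀ hγ.ne', neg_add_cancel, zpow_zero, mul_one] at h4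
      exact h4
    have key : ∀ n : ℕ, ‖((1 : Mat N) - P l).mulVec ξ‖ ≤ (K * C * γ ^ l) * α ^ n := by
      intro n
      set k := l + (n : ℤ) with hkdef
      have hlk : l ≤ k := by omega
      have hinv : ((1 : Mat N) - P k) * evol A k l = evol A k l * ((1 : Mat N) - P l) := by
        rw [sub_mul, mul_sub, one_mul, mul_one, invar A hPinv]
      have e1 : (1 : Mat N) - P l = (evol A l k * ((1 : Mat N) - P k)) * evol A k l := by
        rw [mul_assoc, hinv, ← mul_assoc, evol_mul, evol_self, one_mul]
      have e2 : ((1 : Mat N) - P l).mulVec ξ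
          = (evol A l k * ((1 : Mat N) - P k)).mulVec ((evol A k l).mulVec ξ) := by
        rw [Matrix.mulVec_mulVec, ← e1]
      have b1 : ‖((1 : Mat N) - P l).mulVec ξ‖
          ≤ ‖evol A l k * ((1 : Mat N) - P k)‖ * ‖(evol A k l).mulVec ξ‖ := by
        rw [e2]; exact Matrix.linfty_opNorm_mulVec _ _
      have b2 : ‖evol A l k * ((1 : Mat N) - P k)‖ ≤ γ ^ (l - k) * (K * α ^ (k - l)) := by
        rw [norm_evol_mul hγ]
        have h4 := hu l k hlk
        rw [_root_.one_zpow, mul_one] at h4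
        rw [show (1/α) ^ (l - k) = α ^ (k - l) by rw [one_div, _root_.inv_zpow', neg_sub]] at h4
        exact mul_le_mul_of_nonneg_left h4 (zpow_pos hγ _).le
      have b4 : ‖(evol A k l).mulVec ξ‖ ≤ C * γ ^ k := hC' k hlk
      calc ‖((1 : Mat N) - P l).mulVec ξ‖
          ≤ (γ ^ (l - k) * (K * α ^ (k - l))) * (C * γ ^ k) := by
            refine le_trans b1 (mul_le_mul b2 b4 (norm_nonneg _) ?_)
            positivity
        _ = (K * C * γ ^ l) * α ^ n := by
            have e3 : γ ^ (l - k) * γ ^ k = γ ^ l := by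
              rw [← zpow_add₀ hγ.ne']; congr 1; ring
            have e4 : α ^ (k - l) = α ^ n := by
              rw [show k - l = (n : ℤ) by omega, zpow_natCast]
            calc (γ ^ (l - k) * (K * α ^ (k - l))) * (C * γ ^ k)
                = (γ ^ (l - k) * γ ^ k) * K * C * α ^ (k - l) := by ring
              _ = (K * C * γ ^ l) * α ^ n := by rw [e3, e4]; ring
    have hlim : Filter.Tendsto (fun n : ℕ => (K * C * γ ^ l) * α ^ n) Filter.atTop (nhds 0) := by
      have h5 := (tendsto_pow_atTop_nhds_zero_of_lt_one hα0.le hα1).const_mul (K * C * γ ^ l)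
      simpa using h5
    have hv : ‖((1 : Mat N) - P l).mulVec ξ‖ ≤ 0 := ge_of_tendsto' hlim key
    have hv0 : ((1 : Mat N) - P l).mulVec ξ = 0 := norm_le_zero_iff.mp hv
    rw [Matrix.sub_mulVec, Matrix.one_mulVec, sub_eq_zero] at hv0
    exact hv0.symm
  · intro hfix
    refine ⟨K * ‖ξ‖ * γ ^ (-l), ?_⟩
    intro k hk
    have h1 : ‖(evol A k l).mulVec ξ‖ ≤ γ ^ (k - l) * (K * α ^ (k - l)) * ‖ξ‖ := by
      conv_lhs => rw [← hfix, Matrix.mulVec_mulVec]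
      calc ‖(evol A k l * P l).mulVec ξ‖
          ≤ ‖evol A k l * P l‖ * ‖ξ‖ := Matrix.linfty_opNorm_mulVec _ _
        _ ≤ γ ^ (k - l) * (K * α ^ (k - l)) * ‖ξ‖ := by
            rw [norm_evol_mul hγ]
            have h4 := hs k l hk
            rw [_root_.one_zpow, mul_one] at h4
            exact mul_le_mul_of_nonneg_right
              (mul_le_mul_of_nonneg_left h4 (zpow_pos hγ _).le) (norm_nonneg _)
    have h2 := mul_le_mul_of_nonneg_right h1 (zpow_pos hγ (-k)).le
    refine le_trans h2 ?_
    have e3 : γ ^ (k - l) * γ ^ (-k) = γ ^ (-l) := by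
      rw [← zpow_add₀ hγ.ne']; congr 1; ring
    have hαle : α ^ (k - l) ≤ 1 := zpow_le_one₀ hα0 hα1.le (by omega)
    calc γ ^ (k - l) * (K * α ^ (k - l)) * ‖ξ‖ * γ ^ (-k)
        = (K * ‖ξ‖ * (γ ^ (k - l) * γ ^ (-k))) * α ^ (k - l) := by ring
      _ = (K * ‖ξ‖ * γ ^ (-l)) * α ^ (k - l) := by rw [e3]
      _ ≤ (K * ‖ξ‖ * γ ^ (-l)) * 1 := by
          refine mul_le_mul_of_nonneg_left hαle ?_
          positivity
      _ = K * ‖ξ‖ * γ ^ (-l) := mul_one _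

lemma unstable_ker (hγ : 0 < γ) (h : NEDWith A γ P K α 1) (l : ℤ) :
    unstableSet A γ 1 l = {ξ | (P l).mulVec ξ = 0} := by
  obtain ⟨hPinv, hK, hα0, hα1, -, hs, hu⟩ := h
  ext ξ
  simp only [unstableSet, Set.mem_setOf_eq, _root_.one_zpow, mul_one]
  constructor
  · rintro ⟨C, hC⟩
    have hC0 : 0 ≤ C := le_trans (by positivity) (hC l le_rfl)
    have hC' : ∀ k, k ≤ l → ‖(evol A k l).mulVec ξ‖ ≤ C * γ ^ k := by
      intro k hk
      have h2 := hC k hk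
      have h3 : 0 < γ ^ k := zpow_pos hγ k
      have h4 := mul_le_mul_of_nonneg_right h2 h3.le
      rw [mul_assoc, ← zpow_add₀ hγ.ne', neg_add_cancel, zpow_zero, mul_one] at h4
      exact h4
    have key : ∀ n : ℕ, ‖(P l).mulVec ξ‖ ≤ (K * C * γ ^ l) * α ^ n := by
      intro n
      set k := l - (n : ℤ) with hkdef
      have hlk : k ≤ l := by omega
      have e1 : P l = (evol A l k * P k) * evol A k l := by
        rw [mul_assoc, invar A hPinv, ← mul_assoc, evol_mul, evol_self, one_mul]
      have e2 : (P l).mulVec ξ = (evol A l k * P k).mulVec ((evol A k l).mulVec ξ) := by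
        rw [Matrix.mulVec_mulVec, ← e1]
      have b1 : ‖(P l).mulVec ξ‖ ≤ ‖evol A l k * P k‖ * ‖(evol A k l).mulVec ξ‖ := by
        rw [e2]; exact Matrix.linfty_opNorm_mulVec _ _
      have b2 : ‖evol A l k * P k‖ ≤ γ ^ (l - k) * (K * α ^ (l - k)) := by
        rw [norm_evol_mul hγ]
        have h4 := hs l k hlk
        rw [_root_.one_zpow, mul_one] at h4
        exact mul_le_mul_of_nonneg_left h4 (zpow_pos hγ _).le
      have b4 : ‖(evol A k l).mulVec ξ‖ ≤ C * γ ^ k := hC' k hlk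
      calc ‖(P l).mulVec ξ‖
          ≤ (γ ^ (l - k) * (K * α ^ (l - k))) * (C * γ ^ k) := by
            refine le_trans b1 (mul_le_mul b2 b4 (norm_nonneg _) ?_)
            positivity
        _ = (K * C * γ ^ l) * α ^ n := by
            have e3 : γ ^ (l - k) * γ ^ k = γ ^ l := by
              rw [← zpow_add₀ hγ.ne']; congr 1; ring
            have e4 : α ^ (l - k) = α ^ n := by
              rw [show l - k = (n : ℤ) by omega, zpow_natCast]
            calc (γ ^ (l - k) * (K * α ^ (l - k))) * (C * γ ^ k)
                = (γ ^ (l - k) * γ ^ k) * K * C * α ^ (l - k) := by ring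
              _ = (K * C * γ ^ l) * α ^ n := by rw [e3, e4]; ring
    have hlim : Filter.Tendsto (fun n : ℕ => (K * C * γ ^ l) * α ^ n) Filter.atTop (nhds 0) := by
      have h5 := (tendsto_pow_atTop_nhds_zero_of_lt_one hα0.le hα1).const_mul (K * C * γ ^ l)
      simpa using h5
    exact norm_le_zero_iff.mp (ge_of_tendsto' hlim key)
  · intro hker
    have hfix : ((1 : Mat N) - P l).mulVec ξ = ξ := by
      rw [Matrix.sub_mulVec, Matrix.one_mulVec, hker, sub_zero]
    refine ⟨K * ‖ξ‖ * γ ^ (-l), ?_⟩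
    intro k hk
    have h1 : ‖(evol A k l).mulVec ξ‖ ≤ γ ^ (k - l) * (K * α ^ (l - k)) * ‖ξ‖ := by
      conv_lhs => rw [← hfix, Matrix.mulVec_mulVec]
      calc ‖(evol A k l * ((1 : Mat N) - P l)).mulVec ξ‖
          ≤ ‖evol A k l * ((1 : Mat N) - P l)‖ * ‖ξ‖ := Matrix.linfty_opNorm_mulVec _ _
        _ ≤ γ ^ (k - l) * (K * α ^ (l - k)) * ‖ξ‖ := by
            rw [norm_evol_mul hγ]
            have h4 := hu k l hk
            rw [_root_.one_zpow, mul_one] at h4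
            rw [show (1/α) ^ (k - l) = α ^ (l - k) by rw [one_div, _root_.inv_zpow', neg_sub]] at h4
            exact mul_le_mul_of_nonneg_right
              (mul_le_mul_of_nonneg_left h4 (zpow_pos hγ _).le) (norm_nonneg _)
    have h2 := mul_le_mul_of_nonneg_right h1 (zpow_pos hγ (-k)).le
    refine le_trans h2 ?_
    have e3 : γ ^ (k - l) * γ ^ (-k) = γ ^ (-l) := by
      rw [← zpow_add₀ hγ.ne']; congr 1; ring
    have hαle : α ^ (l - k) ≤ 1 := zpow_le_one₀ hα0 hα1.le (by omega)
    calc γ ^ (k - l) * (K * α ^ (l - k)) * ‖ξ‖ * γ ^ (-k)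
        = (K * ‖ξ‖ * (γ ^ (k - l) * γ ^ (-k))) * α ^ (l - k) := by ring
      _ = (K * ‖ξ‖ * γ ^ (-l)) * α ^ (l - k) := by rw [e3]
      _ ≤ (K * ‖ξ‖ * γ ^ (-l)) * 1 := by
          refine mul_le_mul_of_nonneg_left hαle ?_
          positivity
      _ = K * ‖ξ‖ * γ ^ (-l) := mul_one _

end ned

section part3
variable {N : ℕ} {A : ℤ → GL (Fin N) ℝ} {P : ℤ → Mat N} {γ K α ε : ℝ}

lemma evolW_self (A : ℤ → GL (Fin N) ℝ) (γ : ℝ) (l : ℤ) : evolW A γ l l = (1 : Mat N) := by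
  unfold evolW
  rw [sub_self, zpow_zero, one_smul, evol_self]

lemma eps_eq_one (hN : N ≠ 0) (h : NEDWith A γ P K α ε) : ε = 1 := by
  obtain ⟨hPinv, hK, hα0, hα1, hε, hs, hu⟩ := h
  by_contra hne
  have hε1 : 1 < ε := lt_of_le_of_ne hε (Ne.symm hne)
  have hεpos : (0:ℝ) < ε := lt_trans one_pos hε1
  have hKpos : (0:ℝ) < K := lt_of_lt_of_le one_pos hK
  have hNE : Nonempty (Fin N) := Fin.pos_iff_nonempty.mp (Nat.pos_of_ne_zero hN)
  have key : ∀ l : ℤ, (1:ℝ) ≤ 2 * K * ε ^ l := by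
    intro l
    set x : Fin N → ℝ := fun _ => 1 with hxdef
    have hx : ‖x‖ = 1 := by rw [hxdef, pi_norm_const]; norm_num
    have hsl := hs l l le_rfl
    have hul := hu l l le_rfl
    rw [evolW_self, one_mul, sub_self, zpow_zero, mul_one] at hsl
    rw [evolW_self, one_mul, sub_self, zpow_zero, mul_one] at hul
    have hxd : x = (P l).mulVec x + ((1 : Mat N) - P l).mulVec x := by
      rw [← Matrix.add_mulVec, add_sub_cancel, Matrix.one_mulVec]
    calc (1:ℝ) = ‖x‖ := hx.symm
      _ ≤ ‖(P l).mulVec x‖ + ‖((1 : Mat N) - P l).mulVec x‖ := by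
          conv_lhs => rw [hxd]
          exact norm_add_le _ _
      _ ≤ ‖P l‖ * ‖x‖ + ‖(1 : Mat N) - P l‖ * ‖x‖ :=
          add_le_add (Matrix.linfty_opNorm_mulVec _ _) (Matrix.linfty_opNorm_mulVec _ _)
      _ = ‖P l‖ + ‖(1 : Mat N) - P l‖ := by rw [hx, mul_one, mul_one]
      _ ≤ K * ε ^ l + K * ε ^ l := add_le_add hsl hul
      _ = 2 * K * ε ^ l := by ring
  obtain ⟨n, hn⟩ := exists_pow_lt_of_lt_one (show (0:ℝ) < 1 / (2 * K) by positivity)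
    (show ε⁻¹ < 1 by rw [inv_lt_one_iff₀]; right; exact hε1)
  have h1 := key (-(n : ℤ))
  rw [_root_.zpow_neg, zpow_natCast, ← inv_pow] at h1
  have h2 : 2 * K * ε⁻¹ ^ n < 2 * K * (1 / (2 * K)) := by
    exact mul_lt_mul_of_pos_left hn (by positivity)
  rw [mul_one_div, div_self (by positivity : (2:ℝ) * K ≠ 0)] at h2
  linarith

/-- interpolation of two dichotomies with the same projector -/
lemma ned_interp {γa γb γ' Ka Kb a b : ℝ}
    (hγa : 0 < γa) (hγb : 0 < γb) (hγ' : 0 < γ')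
    (ha : NEDWith A γa P Ka a 1) (hb : NEDWith A γb P Kb b 1)
    (h1 : a * γa < γ') (h2 : b * γ' < γb) :
    NEDWith A γ' P (max Ka Kb) (max (a * γa / γ') (b * γ' / γb)) 1 := by
  obtain ⟨hPinv, hKa, ha0, ha1, -, hsa, hua⟩ := ha
  obtain ⟨-, hKb, hb0, hb1, -, hsb, hub⟩ := hb
  set α' := max (a * γa / γ') (b * γ' / γb) with hα'def
  have hα'0 : 0 < α' := lt_max_of_lt_left (by positivity)
  have hα'1 : α' < 1 := by
    rw [hα'def, max_lt_iff]
    constructor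
    · rw [div_lt_one hγ']; exact h1
    · rw [div_lt_one hγb]; exact h2
  refine ⟨hPinv, le_max_of_le_left hKa, hα'0, hα'1, le_rfl, ?_, ?_⟩
  · intro k l hk
    have hrel : evolW A γ' k l * P l = (γa / γ') ^ (k - l) • (evolW A γa k l * P l) := by
      rw [evolW_scale hγa.ne' hγ'.ne' k l, Matrix.smul_mul]
    rw [hrel, norm_zpow_smul (by positivity), _root_.one_zpow, mul_one]
    have hb1' := hsa k l hk
    rw [_root_.one_zpow, mul_one] at hb1'
    calc (γa / γ') ^ (k - l) * ‖evolW A γa k l * P l‖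
        ≤ (γa / γ') ^ (k - l) * (Ka * a ^ (k - l)) :=
          mul_le_mul_of_nonneg_left hb1' (zpow_pos (by positivity) _).le
      _ = Ka * (a * γa / γ') ^ (k - l) := by
          rw [show a * γa / γ' = a * (γa / γ') by ring, mul_zpow]
          ring
      _ ≤ max Ka Kb * α' ^ (k - l) := by
          refine mul_le_mul (le_max_left _ _) ?_ (zpow_pos (by positivity) _).le
            (le_trans (le_of_lt (lt_of_lt_of_le one_pos hKa)) (le_max_left _ _))
          exact zpow_le_zpow_left'' (by positivity) (le_max_left _ _) (by omega)
  · intro k l hk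
    have hrel : evolW A γ' k l * (1 - P l) = (γb / γ') ^ (k - l) • (evolW A γb k l * (1 - P l)) := by
      rw [evolW_scale hγb.ne' hγ'.ne' k l, Matrix.smul_mul]
    rw [hrel, norm_zpow_smul (by positivity), _root_.one_zpow, mul_one]
    have hb2' := hub k l hk
    rw [_root_.one_zpow, mul_one] at hb2'
    have e1 : (γb / γ') ^ (k - l) * (1 / b) ^ (k - l) = (b * γ' / γb) ^ (l - k) := by
      have e0 : γb / γ' * (1 / b) = (b * γ' / γb)⁻¹ := by
        rw [inv_div, div_mul_div_comm, mul_one, mul_comm γ' b]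
      rw [← mul_zpow, e0, _root_.inv_zpow', neg_sub]
    have e2 : (1 / α') ^ (k - l) = α' ^ (l - k) := by
      rw [one_div, _root_.inv_zpow', neg_sub]
    rw [e2]
    calc (γb / γ') ^ (k - l) * ‖evolW A γb k l * (1 - P l)‖
        ≤ (γb / γ') ^ (k - l) * (Kb * (1 / b) ^ (k - l)) :=
          mul_le_mul_of_nonneg_left hb2' (zpow_pos (by positivity) _).le
      _ = Kb * ((γb / γ') ^ (k - l) * (1 / b) ^ (k - l)) := by ring
      _ = Kb * (b * γ' / γb) ^ (l - k) := by rw [e1]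
      _ ≤ max Ka Kb * α' ^ (l - k) := by
          refine mul_le_mul (le_max_right _ _) ?_ (zpow_pos (by positivity) _).le
            (le_trans (le_of_lt (lt_of_lt_of_le one_pos hKb)) (le_max_right _ _))
          exact zpow_le_zpow_left'' (by positivity) (le_max_right _ _) (by omega)

lemma stable_mono {γ' : ℝ} (hγ : 0 < γ) (hγ' : γ ≤ γ') (l : ℤ) :
    stableSet A γ 1 l ⊆ stableSet A γ' 1 l := by
  have hγ'0 : 0 < γ' := lt_of_lt_of_le hγ hγ'
  rintro ξ ⟨C, hC⟩
  have hC0 : 0 ≤ C := le_trans (by positivity) (hC l le_rfl)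
  refine ⟨C * (γ / γ') ^ l, ?_⟩
  intro k hk
  rw [_root_.one_zpow, mul_one]
  have h1 := hC k hk
  rw [_root_.one_zpow, mul_one] at h1
  have e1 : γ ^ (-k) * (γ / γ') ^ k = γ' ^ (-k) := by
    rw [div_eq_mul_inv, mul_zpow, _root_.inv_zpow', ← mul_assoc, ← zpow_add₀ hγ.ne',
      neg_add_cancel, zpow_zero, one_mul]
  rw [← e1, ← mul_assoc]
  have h2 : (γ / γ') ^ k ≤ (γ / γ') ^ l :=
    zpow_right_anti₀ (by positivity) (by rw [div_le_one hγ'0]; exact hγ') hk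
  exact mul_le_mul h1 h2 (zpow_pos (by positivity) _).le hC0

lemma unstable_anti {γ' : ℝ} (hγ : 0 < γ) (hγ' : γ ≤ γ') (l : ℤ) :
    unstableSet A γ' 1 l ⊆ unstableSet A γ 1 l := by
  have hγ'0 : 0 < γ' := lt_of_lt_of_le hγ hγ'
  rintro ξ ⟨C, hC⟩
  have hC0 : 0 ≤ C := le_trans (by positivity) (hC l le_rfl)
  refine ⟨C * (γ' / γ) ^ l, ?_⟩
  intro k hk
  rw [_root_.one_zpow, mul_one]
  have h1 := hC k hk
  rw [_root_.one_zpow, mul_one] at h1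
  have e1 : γ' ^ (-k) * (γ' / γ) ^ k = γ ^ (-k) := by
    rw [div_eq_mul_inv, mul_zpow, _root_.inv_zpow', ← mul_assoc, ← zpow_add₀ hγ'0.ne',
      neg_add_cancel, zpow_zero, one_mul]
  rw [← e1, ← mul_assoc]
  have h2 : (γ' / γ) ^ k ≤ (γ' / γ) ^ l :=
    zpow_le_zpow_right₀ (by rw [le_div_iff₀ hγ, one_mul]; exact hγ') hk
  exact mul_le_mul h1 h2 (zpow_pos (by positivity) _).le hC0

lemma fix_eq_range {M : Mat N} (hM : M * M = M) :
    {ξ : Fin N → ℝ | M.mulVec ξ = ξ} = ↑(LinearMap.range M.mulVecLin) := by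
  ext ξ
  simp only [Set.mem_setOf_eq, SetLike.mem_coe, LinearMap.mem_range]
  constructor
  · intro h; exact ⟨ξ, h⟩
  · rintro ⟨η, rfl⟩
    show M.mulVec (M.mulVec η) = M.mulVec η
    rw [Matrix.mulVec_mulVec, hM]

lemma ker_eq_ker (M : Mat N) :
    {ξ : Fin N → ℝ | M.mulVec ξ = 0} = ↑(LinearMap.ker M.mulVecLin) := by
  ext ξ
  simp only [Set.mem_setOf_eq, SetLike.mem_coe, LinearMap.mem_ker]
  rfl

lemma fibers_near {c t : ℝ} (hc : 0 < c) (h : NEDWith A c P K α 1)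
    (ht1 : α * c < t) (ht2 : α * t < c) (l : ℤ) :
    stableSet A t 1 l = stableSet A c 1 l ∧ unstableSet A t 1 l = unstableSet A c 1 l := by
  have hα0 : 0 < α := h.2.2.1
  have ht0 : 0 < t := lt_of_le_of_lt (by positivity) ht1
  have h' := ned_interp hc hc ht0 h h ht1 ht2
  constructor
  · rw [stable_fix ht0 h' l, stable_fix hc h l]
  · rw [unstable_ker ht0 h' l, unstable_ker hc h l]

end part3

/-- (Alternative I of the resolvent lemma.) For `γ₁ < γ₂` in the
resolvent set, with `F(l) = U_{γ₁}(l) ∩ S_{γ₂}(l)`, the statements (A) `F ≡ {0}`,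
(B) `[γ₁,γ₂] ⊆ ρ_NED(A)`, (C) the fibers at `γ₁` and `γ₂` agree, and
(D) every `γ ∈ [γ₁,γ₂]` is in the resolvent with the same fibers as `γ₂`,
are pairwise equivalent. -/
theorem resolvent_interval_tfae {N : ℕ} (A : ℤ → GL (Fin N) ℝ)
    (γ₁ γ₂ : ℝ) (h0 : 0 < γ₁) (h12 : γ₁ < γ₂)
    (P₁ P₂ : ℤ → Mat N) (K₁ α₁ ε₁ K₂ α₂ ε₂ : ℝ)
    (h1 : NEDWith A γ₁ P₁ K₁ α₁ ε₁) (h1s : α₁ * ε₁ ^ 2 < 1)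
    (h2 : NEDWith A γ₂ P₂ K₂ α₂ ε₂) (h2s : α₂ * ε₂ ^ 2 < 1) :
    List.TFAE [
      -- (A) the intersection bundle is trivial
      (∀ l : ℤ, unstableSet A γ₁ ε₁ l ∩ stableSet A γ₂ ε₂ l = {0}),
      -- (B) the whole interval is in the resolvent set
      (Set.Icc γ₁ γ₂ ⊆ rhoNED A),
      -- (C) the fibers at γ₁ and γ₂ coincide
      (∀ l : ℤ, stableSet A γ₁ ε₁ l = stableSet A γ₂ ε₂ l ∧
        unstableSet A γ₁ ε₁ l = unstableSet A γ₂ ε₂ l),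
      -- (D) every γ in the interval is in the resolvent with the fibers of γ₂
      (∀ γ ∈ Set.Icc γ₁ γ₂, ∃ P K α ε, NEDWith A γ P K α ε ∧ α * ε ^ 2 < 1 ∧
        ∀ l : ℤ, stableSet A γ ε l = stableSet A γ₂ ε₂ l ∧
          unstableSet A γ ε l = unstableSet A γ₂ ε₂ l)] := by
  by_cases hN : N = 0
  · -- degenerate case: everything is trivial
    subst hN
    have hsub : ∀ ξ : Fin 0 → ℝ, ξ = 0 := fun ξ => funext fun i => i.elim0
    have hmatsub : ∀ M B : Mat 0, M = B := by
      intro M B; ext i j; exact i.elim0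
    have hmemS : ∀ (γ ε : ℝ) (l : ℤ) (ξ : Fin 0 → ℝ), ξ ∈ stableSet A γ ε l := by
      intro γ ε l ξ
      refine ⟨0, fun k _ => ?_⟩
      rw [hsub ξ, Matrix.mulVec_zero, norm_zero, zero_mul, zero_mul]
    have hmemU : ∀ (γ ε : ℝ) (l : ℤ) (ξ : Fin 0 → ℝ), ξ ∈ unstableSet A γ ε l := by
      intro γ ε l ξ
      refine ⟨0, fun k _ => ?_⟩
      rw [hsub ξ, Matrix.mulVec_zero, norm_zero, zero_mul, zero_mul]
    have pA : ∀ l : ℤ, unstableSet A γ₁ ε₁ l ∩ stableSet A γ₂ ε₂ l = {0} := by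
      intro l
      ext ξ
      simp only [Set.mem_inter_iff, Set.mem_singleton_iff]
      exact ⟨fun _ => hsub ξ, fun _ => ⟨hmemU _ _ _ _, hmemS _ _ _ _⟩⟩
    have pD : ∀ γ ∈ Set.Icc γ₁ γ₂, ∃ P K α ε, NEDWith A γ P K α ε ∧ α * ε ^ 2 < 1 ∧
        ∀ l : ℤ, stableSet A γ ε l = stableSet A γ₂ ε₂ l ∧
          unstableSet A γ ε l = unstableSet A γ₂ ε₂ l := by
      intro γ _
      refine ⟨fun _ => 0, 1, 1/2, 1,
        ⟨⟨fun k => hmatsub _ _, fun k => hmatsub _ _⟩, le_rfl, by norm_num, by norm_num,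
          le_rfl, ?_, ?_⟩, by norm_num, fun l => ?_⟩
      · intro k l _
        rw [hmatsub (evolW A γ k l * 0) 0, norm_zero]
        positivity
      · intro k l _
        rw [hmatsub (evolW A γ k l * (1 - 0)) 0, norm_zero]
        positivity
      · exact ⟨Set.ext fun ξ => iff_of_true (hmemS _ _ _ _) (hmemS _ _ _ _),
          Set.ext fun ξ => iff_of_true (hmemU _ _ _ _) (hmemU _ _ _ _)⟩
    have pB : Set.Icc γ₁ γ₂ ⊆ rhoNED A := by
      intro γ hγ
      obtain ⟨P, K, α, ε, h, hstrong, -⟩ := pD γ hγ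
      exact ⟨lt_of_lt_of_le h0 hγ.1, P, K, α, ε, h, hstrong⟩
    have pC : ∀ l : ℤ, stableSet A γ₁ ε₁ l = stableSet A γ₂ ε₂ l ∧
        unstableSet A γ₁ ε₁ l = unstableSet A γ₂ ε₂ l := fun l =>
      ⟨Set.ext fun ξ => iff_of_true (hmemS _ _ _ _) (hmemS _ _ _ _),
        Set.ext fun ξ => iff_of_true (hmemU _ _ _ _) (hmemU _ _ _ _)⟩
    tfae_have 1 → 2 := fun _ => pB
    tfae_have 2 → 3 := fun _ => pC
    tfae_have 3 → 4 := fun _ => pD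
    tfae_have 4 → 1 := fun _ => pA
    tfae_finish
  · -- main case N ≥ 1 : then necessarily ε₁ = ε₂ = 1
    have hε₁ : ε₁ = 1 := eps_eq_one hN h1
    have hε₂ : ε₂ = 1 := eps_eq_one hN h2
    subst hε₁
    subst hε₂
    have hγ₂ : 0 < γ₂ := lt_trans h0 h12
    tfae_have 3 → 1 := by
      intro hC l
      rw [← (hC l).1, stable_fix h0 h1 l, unstable_ker h0 h1 l]
      ext ξ
      simp only [Set.mem_inter_iff, Set.mem_setOf_eq, Set.mem_singleton_iff]
      constructor
      · rintro ⟨hk, hf⟩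
        rw [← hf, hk]
      · rintro rfl
        simp [Matrix.mulVec_zero]
    tfae_have 1 → 3 := by
      intro hA l
      have hS1 : stableSet A γ₁ 1 l = ↑(LinearMap.range (P₁ l).mulVecLin) := by
        rw [stable_fix h0 h1 l]; exact fix_eq_range (h1.1.1 l)
      have hS2 : stableSet A γ₂ 1 l = ↑(LinearMap.range (P₂ l).mulVecLin) := by
        rw [stable_fix hγ₂ h2 l]; exact fix_eq_range (h2.1.1 l)
      have hU1 : unstableSet A γ₁ 1 l = ↑(LinearMap.ker (P₁ l).mulVecLin) := by
        rw [unstable_ker h0 h1 l]; exact ker_eq_ker _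
      have hU2 : unstableSet A γ₂ 1 l = ↑(LinearMap.ker (P₂ l).mulVecLin) := by
        rw [unstable_ker hγ₂ h2 l]; exact ker_eq_ker _
      have hle : LinearMap.range (P₁ l).mulVecLin ≤ LinearMap.range (P₂ l).mulVecLin := by
        have hmono := stable_mono (A := A) h0 h12.le l
        rw [hS1, hS2] at hmono
        exact SetLike.coe_subset_coe.mp hmono
      have hule : LinearMap.ker (P₂ l).mulVecLin ≤ LinearMap.ker (P₁ l).mulVecLin := by
        have hmono := unstable_anti (A := A) h0 h12.le l
        rw [hU1, hU2] at hmono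
        exact SetLike.coe_subset_coe.mp hmono
      have hdisj : LinearMap.range (P₂ l).mulVecLin ⊓ LinearMap.ker (P₁ l).mulVecLin = ⊥ := by
        rw [Submodule.eq_bot_iff]
        intro x hx
        have hx' : x ∈ unstableSet A γ₁ 1 l ∩ stableSet A γ₂ 1 l := by
          refine ⟨?_, ?_⟩
          · rw [hU1]; exact SetLike.mem_coe.mpr hx.2
          · rw [hS2]; exact SetLike.mem_coe.mpr hx.1
        rw [hA l] at hx'
        exact hx'
      have r1 := LinearMap.finrank_range_add_finrank_ker (P₁ l).mulVecLin
      have r2 := LinearMap.finrank_range_add_finrank_ker (P₂ l).mulVecLin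
      have r3 := Submodule.finrank_sup_add_finrank_inf_eq
        (LinearMap.range (P₂ l).mulVecLin) (LinearMap.ker (P₁ l).mulVecLin)
      rw [hdisj, finrank_bot] at r3
      have r5 := Submodule.finrank_le
        (LinearMap.range (P₂ l).mulVecLin ⊔ LinearMap.ker (P₁ l).mulVecLin)
      have hSeq : LinearMap.range (P₁ l).mulVecLin = LinearMap.range (P₂ l).mulVecLin :=
        Submodule.eq_of_le_of_finrank_le hle (by omega)
      have hrr : Module.finrank ℝ (LinearMap.range (P₁ l).mulVecLin)
          = Module.finrank ℝ (LinearMap.range (P₂ l).mulVecLin) := by rw [hSeq]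
      have hUeq : LinearMap.ker (P₂ l).mulVecLin = LinearMap.ker (P₁ l).mulVecLin :=
        Submodule.eq_of_le_of_finrank_le hule (by omega)
      constructor
      · rw [hS1, hS2, hSeq]
      · rw [hU1, hU2, hUeq]
    tfae_have 3 → 4 := by
      intro hC
      have hPeq : ∀ l, P₁ l = P₂ l := by
        intro l
        have hSs : {ξ : Fin N → ℝ | (P₁ l).mulVec ξ = ξ} = {ξ | (P₂ l).mulVec ξ = ξ} := by
          rw [← stable_fix h0 h1 l, ← stable_fix hγ₂ h2 l]
          exact (hC l).1
        have hUs : {ξ : Fin N → ℝ | (P₁ l).mulVec ξ = 0} = {ξ | (P₂ l).mulVec ξ = 0} := by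
          rw [← unstable_ker h0 h1 l, ← unstable_ker hγ₂ h2 l]
          exact (hC l).2
        have hmv : ∀ ξ, (P₁ l).mulVec ξ = (P₂ l).mulVec ξ := by
          intro ξ
          have hs' : (P₂ l).mulVec ((P₁ l).mulVec ξ) = (P₁ l).mulVec ξ := by
            have h3 : ((P₁ l).mulVec ξ) ∈ {η : Fin N → ℝ | (P₁ l).mulVec η = η} := by
              show (P₁ l).mulVec ((P₁ l).mulVec ξ) = (P₁ l).mulVec ξ
              rw [Matrix.mulVec_mulVec, h1.1.1 l]
            rw [hSs] at h3
            exact h3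
          have hu' : (P₂ l).mulVec (ξ - (P₁ l).mulVec ξ) = 0 := by
            have h3 : (ξ - (P₁ l).mulVec ξ) ∈ {η : Fin N → ℝ | (P₁ l).mulVec η = 0} := by
              show (P₁ l).mulVec _ = 0
              rw [Matrix.mulVec_sub, Matrix.mulVec_mulVec, h1.1.1 l, sub_self]
            rw [hUs] at h3
            exact h3
          have hsplit : (P₂ l).mulVec ξ
              = (P₂ l).mulVec ((P₁ l).mulVec ξ) + (P₂ l).mulVec (ξ - (P₁ l).mulVec ξ) := by
            rw [← Matrix.mulVec_add, add_sub_cancel]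
          rw [hsplit, hs', hu', add_zero]
        have hlin : Matrix.toLin' (P₁ l) = Matrix.toLin' (P₂ l) :=
          LinearMap.ext fun ξ => by rw [Matrix.toLin'_apply, Matrix.toLin'_apply, hmv ξ]
        exact Matrix.toLin'.injective hlin
      have hP12 : P₁ = P₂ := funext hPeq
      intro γ hγ
      obtain ⟨hγ1, hγ2'⟩ := hγ
      have hγ0 : 0 < γ := lt_of_lt_of_le h0 hγ1
      have h2' : NEDWith A γ₂ P₁ K₂ α₂ 1 := by rw [hP12]; exact h2
      have hb1 : α₁ * γ₁ < γ := by
        have := h1.2.2.2.1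
        nlinarith
      have hb2 : α₂ * γ < γ₂ := by
        have := h2.2.2.2.1
        nlinarith
      have hni := ned_interp h0 hγ₂ hγ0 h1 h2' hb1 hb2
      refine ⟨P₁, max K₁ K₂, max (α₁ * γ₁ / γ) (α₂ * γ / γ₂), 1, hni, ?_, fun l => ?_⟩
      · rw [one_pow, mul_one, max_lt_iff]
        constructor
        · rw [div_lt_one hγ0]; exact hb1
        · rw [div_lt_one hγ₂]; exact hb2
      · constructor
        · rw [stable_fix hγ0 hni l, stable_fix hγ₂ h2 l, hPeq l]
        · rw [unstable_ker hγ0 hni l, unstable_ker hγ₂ h2 l, hPeq l]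
    tfae_have 4 → 2 := by
      intro hD γ hγ
      obtain ⟨P, K, α, ε, h, hstrong, -⟩ := hD γ hγ
      exact ⟨lt_of_lt_of_le h0 hγ.1, P, K, α, ε, h, hstrong⟩
    tfae_have 2 → 3 := by
      intro hB
      have res : ∀ γ ∈ Set.Icc γ₁ γ₂, ∃ P K α, NEDWith A γ P K α 1 := by
        intro γ hγ
        obtain ⟨hpos, P, K, α, ε, h, hstrong⟩ := hB hγ
        have hε := eps_eq_one hN h
        subst hε
        exact ⟨P, K, α, h⟩
      set T : Set ℝ := {t | t ∈ Set.Icc γ₁ γ₂ ∧ ∀ l, stableSet A γ₁ 1 l = stableSet A t 1 l ∧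
        unstableSet A γ₁ 1 l = unstableSet A t 1 l} with hTdef
      have hT₁ : γ₁ ∈ T := ⟨⟨le_rfl, h12.le⟩, fun l => ⟨rfl, rfl⟩⟩
      have hTne : T.Nonempty := ⟨γ₁, hT₁⟩
      have hTbdd : BddAbove T := ⟨γ₂, fun t ht => ht.1.2⟩
      set c := sSup T with hcdef
      have hc1 : γ₁ ≤ c := le_csSup hTbdd hT₁
      have hc2 : c ≤ γ₂ := csSup_le hTne (fun t ht => ht.1.2)
      have hc0 : 0 < c := lt_of_lt_of_le h0 hc1
      obtain ⟨P, K, α, hc⟩ := res c ⟨hc1, hc2⟩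
      have hα0 : 0 < α := hc.2.2.1
      have hα1 : α < 1 := hc.2.2.2.1
      have hcT : c ∈ T := by
        obtain ⟨t, htT, htgt⟩ := exists_lt_of_lt_csSup hTne (show α * c < c by nlinarith)
        have htle : t ≤ c := le_csSup hTbdd htT
        have hfib := fun l => fibers_near hc0 hc htgt (show α * t < c by nlinarith) l
        exact ⟨⟨hc1, hc2⟩, fun l =>
          ⟨((htT.2 l).1).trans (hfib l).1, ((htT.2 l).2).trans (hfib l).2⟩⟩
      have hγ₂le : γ₂ ≤ c := by
        by_contra hlt
        push_neg at hlt
        set γ' := min γ₂ ((c + c / α) / 2) with hγ'def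
        have hckey : c < c / α := by
          rw [lt_div_iff₀ hα0]; nlinarith
        have hγ'1 : c < γ' := lt_min hlt (by nlinarith)
        have hγ'2 : γ' ≤ γ₂ := min_le_left _ _
        have hγ'lt : γ' < c / α := lt_of_le_of_lt (min_le_right _ _) (by nlinarith)
        have hγ'3 : α * γ' < c := by
          rw [lt_div_iff₀ hα0] at hγ'lt
          nlinarith
        have hγ'4 : α * c < γ' := lt_trans (by nlinarith) hγ'1
        have hfib := fun l => fibers_near hc0 hc hγ'4 hγ'3 l
        have hmem : γ' ∈ T := ⟨⟨le_trans hc1 hγ'1.le, hγ'2⟩, fun l =>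
          ⟨(hcT.2 l).1.trans (hfib l).1.symm, (hcT.2 l).2.trans (hfib l).2.symm⟩⟩
        exact absurd (le_csSup hTbdd hmem) (not_le.mpr hγ'1)
      have hceq : c = γ₂ := le_antisymm hc2 hγ₂le
      rw [hceq] at hcT
      exact hcT.2
    tfae_finish
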